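/- Let A ⊂ ℝ^k be compact and suppose F has bounded variation along x̄ uniformly over A, with δ̄, ε̄ > 0 such that η^{δ}_{ε,A}(T) < ∞ for every δ ∈ (0,δ̄), ε ∈ (0,ε̄], and assume the modulus-of-continuity hypothesis (C2). For s ∈ (S,T] and t ∈ [s,T], let η^δ_A([s,t]) denote the δ-perturbed cumulative variation of F computed over the interval [s,t] (i.e., with partitions of [s,t] in place of [S,t], followed by the limit ε↓0). Then for every δ ∈ (0,δ̄) and every [s,t] ⊂ [S,T] with s > S: η^δ_A(t) − η^δ_A(s) = η^δ_A([s,t]). -/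

import Mathlib

open Set Metric Filter MeasureTheory
open scoped ENNReal Topology Classical

noncomputable section

/-- Euclidean space `ℝ^n`. -/
abbrev Eucl (n : ℕ) : Type := EuclideanSpace ℝ (Fin n)

/-- A (strict) partition `a = τ 0 < τ 1 < ⋯ < τ N = b` of the interval `[a,b]`. -/
def IsPartition (a b : ℝ) (N : ℕ) (τ : ℕ → ℝ) : Prop :=
  0 < N ∧ τ 0 = a ∧ τ N = b ∧ ∀ i < N, τ i < τ (i + 1)

/-- The mesh (diameter) of the partition `τ` is at most `ε`. -/
def MeshLE (N : ℕ) (τ : ℕ → ℝ) (ε : ℝ) : Prop :=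
  ∀ i < N, τ (i + 1) - τ i ≤ ε

/-- The tube `x̄([s,t]) + δ B` around the arc `x̄` on `[s,t]`. -/
def tube {n : ℕ} (xbar : ℝ → Eucl n) (s t δ : ℝ) : Set (Eucl n) :=
  {y | ∃ r ∈ Icc s t, dist y (xbar r) ≤ δ}

/-- `I^δ(𝒯) = Σᵢ sup { d_H (F(t_{i+1},x,a), F(t_i,x,a)) : x ∈ x̄([t_i,t_{i+1}]) + δB, a ∈ A }`. -/
def variSum {n k : ℕ} (F : ℝ → Eucl n → Eucl k → Set (Eucl n)) (xbar : ℝ → Eucl n)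
    (A : Set (Eucl k)) (δ : ℝ) (N : ℕ) (τ : ℕ → ℝ) : ℝ≥0∞ :=
  ∑ i ∈ Finset.range N,
    ⨆ x ∈ tube xbar (τ i) (τ (i + 1)) δ, ⨆ a ∈ A,
      EMetric.hausdorffEdist (F (τ (i + 1)) x a) (F (τ i) x a)

/-- `η^δ_ε(t)`: the `(δ,ε)`-perturbed cumulative variation of `F` along `x̄`, uniformly
over `A`, on the base interval `[S,t]`.  (For `t = S` there are no partitions and the
supremum is `0`.) -/
def etaE {n k : ℕ} (F : ℝ → Eucl n → Eucl k → Set (Eucl n)) (xbar : ℝ → Eucl n)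
    (A : Set (Eucl k)) (S δ ε t : ℝ) : ℝ≥0∞ :=
  ⨆ (N : ℕ) (τ : ℕ → ℝ) (_ : IsPartition S t N τ) (_ : MeshLE N τ ε),
    variSum F xbar A δ N τ

/-- `η^δ(t) = lim_{ε ↓ 0} η^δ_ε(t)` (the limit of a monotone family: the infimum). -/
def etaD {n k : ℕ} (F : ℝ → Eucl n → Eucl k → Set (Eucl n)) (xbar : ℝ → Eucl n)
    (A : Set (Eucl k)) (S δ t : ℝ) : ℝ≥0∞ :=
  ⨅ (ε : ℝ) (_ : 0 < ε), etaE F xbar A S δ ε t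

/-- `η(t) = lim_{δ ↓ 0} η^δ(t)`: the cumulative variation function of `F` along `x̄`,
uniformly over `A`. -/
def eta {n k : ℕ} (F : ℝ → Eucl n → Eucl k → Set (Eucl n)) (xbar : ℝ → Eucl n)
    (A : Set (Eucl k)) (S t : ℝ) : ℝ≥0∞ :=
  ⨅ (δ : ℝ) (_ : 0 < δ), etaD F xbar A S δ t

/-- Hypothesis (C1): nonempty closed values, measurability in `t`, and uniform
boundedness `F(t,x,a) ⊆ cB` near the arc. -/
def HypC1 {n k : ℕ} (F : ℝ → Eucl n → Eucl k → Set (Eucl n)) (xbar : ℝ → Eucl n)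
    (A : Set (Eucl k)) (S T δbar : ℝ) : Prop :=
  (∀ t x a, (F t x a).Nonempty ∧ IsClosed (F t x a)) ∧
  (∀ (x : Eucl n) (a : Eucl k), ∀ U : Set (Eucl n), IsOpen U →
     MeasurableSet {t | t ∈ Icc S T ∧ (F t x a ∩ U).Nonempty}) ∧
  (∃ c > (0 : ℝ), ∀ t ∈ Icc S T, ∀ a ∈ A, ∀ x : Eucl n, dist x (xbar t) ≤ δbar →
     F t x a ⊆ closedBall 0 c)

/-- Hypothesis (C2): `F(t,x,a) ⊆ F(t,x',a') + γ(|x-x'| + |a-a'|)B` near the arc, where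
`γ` is a modulus of continuity. -/
def HypC2 {n k : ℕ} (F : ℝ → Eucl n → Eucl k → Set (Eucl n)) (xbar : ℝ → Eucl n)
    (A : Set (Eucl k)) (S T δbar : ℝ) (γ : ℝ → ℝ) : Prop :=
  ContinuousOn γ (Ici 0) ∧ MonotoneOn γ (Ici 0) ∧ γ 0 = 0 ∧ (∀ r ≥ (0 : ℝ), 0 ≤ γ r) ∧
  ∀ t ∈ Icc S T, ∀ x x' : Eucl n, ∀ a ∈ A, ∀ a' ∈ A,
    dist x (xbar t) ≤ δbar → dist x' (xbar t) ≤ δbar →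
    ∀ y ∈ F t x a, ∃ z ∈ F t x' a', dist y z ≤ γ (dist x x' + dist a a')

end

section Aux

-- stage 1 lemmas
lemma part_le {N : ℕ} {τ : ℕ → ℝ} (h : ∀ i < N, τ i < τ (i + 1)) {i j : ℕ}
    (hij : i ≤ j) (hjN : j ≤ N) : τ i ≤ τ j := by
  induction j with
  | zero => simp_all
  | succ m ih =>
    rcases Nat.lt_or_ge i (m + 1) with hi | hi
    · exact (ih (Nat.lt_succ_iff.mp hi) ((Nat.le_succ m).trans hjN)).trans
        (h m (Nat.lt_of_lt_of_le (Nat.lt_succ_self m) hjN)).le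
    · have : i = m + 1 := le_antisymm hij hi
      subst this; rfl

lemma etaE_degenerate {n k : ℕ} (F : ℝ → Eucl n → Eucl k → Set (Eucl n))
    (xbar : ℝ → Eucl n) (A : Set (Eucl k)) (s δ ε : ℝ) :
    etaE F xbar A s δ ε s = 0 := by
  refine le_antisymm ?_ zero_le
  refine iSup_le fun N => iSup_le fun τ => iSup_le fun hp => ?_
  obtain ⟨hN, h0, hNs, hstr⟩ := hp
  have h1 : τ 0 < τ N := lt_of_lt_of_le (hstr 0 hN) (part_le hstr hN (le_refl N))
  rw [h0, hNs] at h1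
  exact absurd h1 (lt_irrefl s)

/-- concatenation of two partitions -/
def pcat (N1 : ℕ) (τ1 τ2 : ℕ → ℝ) : ℕ → ℝ := fun i => if i ≤ N1 then τ1 i else τ2 (i - N1)

lemma pcat_isPartition {S s t : ℝ} {N1 N2 : ℕ} {τ1 τ2 : ℕ → ℝ}
    (h1 : IsPartition S s N1 τ1) (h2 : IsPartition s t N2 τ2) :
    IsPartition S t (N1 + N2) (pcat N1 τ1 τ2) := by
  obtain ⟨hN1, h10, h1N, h1s⟩ := h1
  obtain ⟨hN2, h20, h2N, h2s⟩ := h2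
  have key : ∀ i, N1 ≤ i → pcat N1 τ1 τ2 i = τ2 (i - N1) := by
    intro i hi
    rcases eq_or_lt_of_le hi with h | h
    · simp [pcat, ← h, h1N, ← h20]
    · simp [pcat, Nat.not_le.mpr h]
  refine ⟨by positivity, by simp [pcat, h10], ?_, ?_⟩
  · rw [key _ (Nat.le_add_right _ _)]; simp [h2N]
  · intro i hi
    rcases Nat.lt_or_ge i N1 with h | h
    · have : pcat N1 τ1 τ2 i = τ1 i := by simp [pcat, h.le]
      have h2' : pcat N1 τ1 τ2 (i + 1) = τ1 (i + 1) := by simp [pcat, Nat.succ_le_of_lt h]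
      rw [this, h2']; exact h1s i h
    · rw [key i h, key (i + 1) (h.trans (Nat.le_succ i))]
      have : i + 1 - N1 = (i - N1) + 1 := by omega
      rw [this]
      exact h2s _ (by omega)

lemma pcat_meshLE {N1 N2 : ℕ} {τ1 τ2 : ℕ → ℝ} {ε : ℝ} (h1N : τ1 N1 = τ2 0)
    (hm1 : MeshLE N1 τ1 ε) (hm2 : MeshLE N2 τ2 ε) : MeshLE (N1 + N2) (pcat N1 τ1 τ2) ε := by
  have key : ∀ i, N1 ≤ i → pcat N1 τ1 τ2 i = τ2 (i - N1) := by
    intro i hi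
    rcases eq_or_lt_of_le hi with h | h
    · simp [pcat, ← h, h1N]
    · simp [pcat, Nat.not_le.mpr h]
  intro i hi
  rcases Nat.lt_or_ge i N1 with h | h
  · have e1 : pcat N1 τ1 τ2 i = τ1 i := by simp [pcat, h.le]
    have e2 : pcat N1 τ1 τ2 (i + 1) = τ1 (i + 1) := by simp [pcat, Nat.succ_le_of_lt h]
    rw [e1, e2]; exact hm1 i h
  · rw [key i h, key (i + 1) (h.trans (Nat.le_succ i))]
    have : i + 1 - N1 = (i - N1) + 1 := by omega
    rw [this]; exact hm2 _ (by omega)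

lemma variSum_pcat {n k : ℕ} (F : ℝ → Eucl n → Eucl k → Set (Eucl n)) (xbar : ℝ → Eucl n)
    (A : Set (Eucl k)) (δ : ℝ) {N1 N2 : ℕ} {τ1 τ2 : ℕ → ℝ} (h1N : τ1 N1 = τ2 0) :
    variSum F xbar A δ (N1 + N2) (pcat N1 τ1 τ2)
      = variSum F xbar A δ N1 τ1 + variSum F xbar A δ N2 τ2 := by
  have key : ∀ i, N1 ≤ i → pcat N1 τ1 τ2 i = τ2 (i - N1) := by
    intro i hi
    rcases eq_or_lt_of_le hi with h | h
    · simp [pcat, ← h, h1N]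
    · simp [pcat, Nat.not_le.mpr h]
  unfold variSum
  rw [Finset.sum_range_add]
  congr 1
  · apply Finset.sum_congr rfl
    intro i hi
    have hi' := Finset.mem_range.mp hi
    have e1 : pcat N1 τ1 τ2 i = τ1 i := by simp [pcat, hi'.le]
    have e2 : pcat N1 τ1 τ2 (i + 1) = τ1 (i + 1) := by simp [pcat, Nat.succ_le_of_lt hi']
    rw [e1, e2]
  · apply Finset.sum_congr rfl
    intro i hi
    have e1 : pcat N1 τ1 τ2 (N1 + i) = τ2 i := by
      rw [key _ (Nat.le_add_right _ _)]; congr 1; omega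
    have e2 : pcat N1 τ1 τ2 (N1 + i + 1) = τ2 (i + 1) := by
      rw [key _ (by omega)]; congr 1; omega
    rw [e1, e2]


variable {n k : ℕ} (F : ℝ → Eucl n → Eucl k → Set (Eucl n)) (xbar : ℝ → Eucl n)
    (A : Set (Eucl k))

lemma le_etaE {S δ ε t : ℝ} {N : ℕ} {τ : ℕ → ℝ} (hp : IsPartition S t N τ)
    (hm : MeshLE N τ ε) : variSum F xbar A δ N τ ≤ etaE F xbar A S δ ε t := by
  calc variSum F xbar A δ N τ
      ≤ ⨆ (_ : IsPartition S t N τ) (_ : MeshLE N τ ε), variSum F xbar A δ N τ := by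
        rw [iSup_pos hp, iSup_pos hm]
    _ ≤ _ := by
        refine le_trans ?_ (le_iSup _ N)
        exact le_iSup (fun τ => ⨆ (_ : IsPartition S t N τ) (_ : MeshLE N τ ε), variSum F xbar A δ N τ) τ

lemma etaE_mono_eps {S δ t : ℝ} {ε ε' : ℝ} (h : ε ≤ ε') :
    etaE F xbar A S δ ε t ≤ etaE F xbar A S δ ε' t := by
  refine iSup_le fun N => iSup_le fun τ => iSup_le fun hp => iSup_le fun hm => ?_
  exact le_etaE F xbar A hp (fun i hi => (hm i hi).trans h)

lemma etaD_le_etaE {S δ t ε : ℝ} (hε : 0 < ε) :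
    etaD F xbar A S δ t ≤ etaE F xbar A S δ ε t :=
  (iInf_le _ ε).trans (iInf_le _ hε)

-- uniform partition of [t,T]
lemma uniform_partition {t T ε : ℝ} (htT : t < T) (hε : 0 < ε) :
    ∃ M : ℕ, ∃ σ : ℕ → ℝ, IsPartition t T M σ ∧ MeshLE M σ ε := by
  set M : ℕ := ⌈(T - t) / ε⌉₊ with hM
  have hd : 0 < T - t := by linarith
  have hM0 : 0 < M := Nat.ceil_pos.mpr (by positivity)
  have hMR : (0:ℝ) < M := Nat.cast_pos.mpr hM0
  refine ⟨M, fun i => t + i * ((T - t) / M), ⟨hM0, by simp, ?_, ?_⟩, ?_⟩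
  · field_simp; ring
  · intro i hi
    have : (i:ℝ) < (i:ℝ) + 1 := by linarith
    have hstep : 0 < (T - t) / M := by positivity
    push_cast
    nlinarith
  · intro i hi
    have hle : (T - t) / ε ≤ M := Nat.le_ceil _
    have : (T - t) / M ≤ ε := by
      rw [div_le_iff₀ hMR]
      calc T - t = ((T - t) / ε) * ε := by field_simp
        _ ≤ M * ε := by nlinarith
        _ = ε * M := by ring
    push_cast
    nlinarith

lemma etaE_mono_t {S δ ε t T : ℝ} (hSt : S < t) (htT : t ≤ T) (hε : 0 < ε) :
    etaE F xbar A S δ ε t ≤ etaE F xbar A S δ ε T := by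
  rcases eq_or_lt_of_le htT with rfl | hlt
  · exact le_refl _
  refine iSup_le fun N => iSup_le fun τ => iSup_le fun hp => iSup_le fun hm => ?_
  obtain ⟨M, σ, hpσ, hmσ⟩ := uniform_partition hlt hε
  have h1N : τ N = σ 0 := by rw [hp.2.2.1, hpσ.2.1]
  calc variSum F xbar A δ N τ
      ≤ variSum F xbar A δ N τ + variSum F xbar A δ M σ := le_self_add
    _ = variSum F xbar A δ (N + M) (pcat N τ σ) := (variSum_pcat F xbar A δ h1N).symm
    _ ≤ _ := le_etaE F xbar A (pcat_isPartition hp hpσ) (pcat_meshLE h1N hm hmσ)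

-- superadditivity at etaE level
def PartIdx (S t ε : ℝ) : Type := {p : ℕ × (ℕ → ℝ) // IsPartition S t p.1 p.2 ∧ MeshLE p.1 p.2 ε}

lemma etaE_eq_subtype (S δ ε t : ℝ) :
    etaE F xbar A S δ ε t = ⨆ p : PartIdx S t ε, variSum F xbar A δ p.1.1 p.1.2 := by
  refine le_antisymm ?_ ?_
  · refine iSup_le fun N => iSup_le fun τ => iSup_le fun h1 => iSup_le fun h2 => ?_
    exact le_iSup_of_le ⟨⟨N, τ⟩, h1, h2⟩ le_rfl
  · exact iSup_le fun p => le_etaE F xbar A p.2.1 p.2.2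

lemma etaE_superadd {S s t δ ε : ℝ} (hSs : S < s) (hst : s < t) (hε : 0 < ε) :
    etaE F xbar A S δ ε s + etaE F xbar A s δ ε t ≤ etaE F xbar A S δ ε t := by
  have n1 : Nonempty (PartIdx S s ε) := by
    obtain ⟨M, σ, h1, h2⟩ := uniform_partition hSs hε
    exact ⟨⟨⟨M, σ⟩, h1, h2⟩⟩
  have n2 : Nonempty (PartIdx s t ε) := by
    obtain ⟨M, σ, h1, h2⟩ := uniform_partition hst hε
    exact ⟨⟨⟨M, σ⟩, h1, h2⟩⟩
  rw [etaE_eq_subtype F xbar A S δ ε s, etaE_eq_subtype F xbar A s δ ε t]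
  refine ENNReal.iSup_add_iSup_le fun p q => ?_
  obtain ⟨⟨N1, τ1⟩, hp1, hm1⟩ := p
  obtain ⟨⟨N2, τ2⟩, hp2, hm2⟩ := q
  simp only [] at hp1 hm1 hp2 hm2 ⊢
  have h1N : τ1 N1 = τ2 0 := by rw [hp1.2.2.1, hp2.2.1]
  rw [← variSum_pcat F xbar A δ h1N]
  exact le_etaE F xbar A (pcat_isPartition hp1 hp2) (pcat_meshLE h1N hm1 hm2)

lemma etaD_superadd {S s t δ : ℝ} (hSs : S < s) (hst : s < t) :
    etaD F xbar A S δ s + etaD F xbar A s δ t ≤ etaD F xbar A S δ t := by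
  refine le_iInf fun ε => le_iInf fun hε => ?_
  exact le_trans (add_le_add (etaD_le_etaE F xbar A hε) (etaD_le_etaE F xbar A hε))
    (etaE_superadd F xbar A hSs hst hε)


/-- Core bound: the Hausdorff-variation term over an interval `[p,q]` containing `s`
is bounded by the two sub-terms plus `2 γ(κ)`. -/
lemma core_term_bound {S T s δ δbar ε κ p q : ℝ} (γ : ℝ → ℝ)
    (hγmono : MonotoneOn γ (Ici 0))
    (hC2 : ∀ t ∈ Icc S T, ∀ x x' : Eucl n, ∀ a ∈ A, ∀ a' ∈ A,
      dist x (xbar t) ≤ δbar → dist x' (xbar t) ≤ δbar →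
      ∀ y ∈ F t x a, ∃ z ∈ F t x' a', dist y z ≤ γ (dist x x' + dist a a'))
    (hδ : 0 < δ) (hκ : 0 < κ) (hδκ : δ + κ ≤ δbar)
    (hosc : ∀ u ∈ Icc S T, ∀ v ∈ Icc S T, |u - v| ≤ ε → dist (xbar u) (xbar v) ≤ κ)
    (hpI : p ∈ Icc S T) (hqI : q ∈ Icc S T) (hsI : s ∈ Icc S T)
    (hps : p < s) (hsq : s ≤ q) (hpq : q - p ≤ ε) :
    (⨆ x ∈ tube xbar p q δ, ⨆ a ∈ A,
        EMetric.hausdorffEdist (F q x a) (F p x a))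
      ≤ (⨆ x ∈ tube xbar p s δ, ⨆ a ∈ A,
          EMetric.hausdorffEdist (F s x a) (F p x a))
        + (⨆ x ∈ tube xbar s q δ, ⨆ a ∈ A,
            EMetric.hausdorffEdist (F q x a) (F s x a))
        + 2 * ENNReal.ofReal (γ κ) := by
  set c := ENNReal.ofReal (γ κ) with hc
  refine iSup₂_le fun x hx => iSup₂_le fun a ha => ?_
  obtain ⟨r, hr, hxr⟩ := hx
  set x' : Eucl n := x + (xbar s - xbar r) with hx'
  have hrI : r ∈ Icc S T := ⟨hpI.1.trans hr.1, hr.2.trans hqI.2⟩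
  have habs : ∀ u v : ℝ, u ∈ Icc p q → v ∈ Icc p q → |u - v| ≤ ε := by
    intro u v hu hv
    rw [abs_le]
    constructor <;> [nlinarith [hu.1, hu.2, hv.1, hv.2]; nlinarith [hu.1, hu.2, hv.1, hv.2]]
  have hsIcc : s ∈ Icc p q := ⟨hps.le, hsq⟩
  have hxx' : dist x x' ≤ κ := by
    rw [hx', dist_self_add_right]
    calc ‖xbar s - xbar r‖ = dist (xbar s) (xbar r) := (dist_eq_norm _ _).symm
      _ ≤ κ := hosc s hsI r hrI (habs s r hsIcc hr)
  have hx's : dist x' (xbar s) ≤ δ := by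
    have : x' - xbar s = x - xbar r := by rw [hx']; abel
    rw [dist_eq_norm, this, ← dist_eq_norm]
    exact hxr
  -- δbar bounds
  have hbar : ∀ u ∈ Icc p q, u ∈ Icc S T → dist x (xbar u) ≤ δbar ∧ dist x' (xbar u) ≤ δbar := by
    intro u hu huI
    constructor
    · calc dist x (xbar u) ≤ dist x (xbar r) + dist (xbar r) (xbar u) := dist_triangle _ _ _
        _ ≤ δ + κ := add_le_add hxr (hosc r hrI u huI (habs r u hr hu))
        _ ≤ δbar := hδκ
    · calc dist x' (xbar u) ≤ dist x' (xbar s) + dist (xbar s) (xbar u) := dist_triangle _ _ _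
        _ ≤ δ + κ := add_le_add hx's (hosc s hsI u huI (habs s u hsIcc hu))
        _ ≤ δbar := hδκ
  -- γ bound on Hausdorff distance between F u x a and F u x' a
  have hγb : ∀ u ∈ Icc S T, dist x (xbar u) ≤ δbar → dist x' (xbar u) ≤ δbar →
      EMetric.hausdorffEdist (F u x a) (F u x' a) ≤ c := by
    intro u huI hxu hx'u
    have key : ∀ y z : Eucl n, dist y z ≤ γ (dist x x' + dist a a) →
        edist y z ≤ c := by
      intro y z hyz
      rw [edist_dist, hc]
      apply ENNReal.ofReal_le_ofReal
      refine hyz.trans ?_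
      rw [dist_self, add_zero]
      exact hγmono (mem_Ici.mpr dist_nonneg) (mem_Ici.mpr hκ.le) hxx'
    refine EMetric.hausdorffEdist_le_of_mem_edist ?_ ?_
    · intro y hy
      obtain ⟨z, hz, hyz⟩ := hC2 u huI x x' a ha a ha hxu hx'u y hy
      exact ⟨z, hz, key y z hyz⟩
    · intro y hy
      obtain ⟨z, hz, hyz⟩ := hC2 u huI x' x a ha a ha hx'u hxu y hy
      refine ⟨z, hz, ?_⟩
      apply key y z
      rwa [dist_comm x' x] at hyz
  have hbp := hbar p ⟨le_refl p, hps.le.trans hsq⟩ hpI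
  have hbq := hbar q ⟨hps.le.trans hsq, le_refl q⟩ hqI
  have h1 : EMetric.hausdorffEdist (F q x a) (F q x' a) ≤ c := hγb q hqI hbq.1 hbq.2
  have h4 : EMetric.hausdorffEdist (F p x' a) (F p x a) ≤ c := by
    exact (le_of_eq EMetric.hausdorffEdist_comm).trans (hγb p hpI hbp.1 hbp.2)
  have hx'L : x' ∈ tube xbar p s δ := ⟨s, ⟨hps.le, le_refl s⟩, hx's⟩
  have hx'R : x' ∈ tube xbar s q δ := ⟨s, ⟨le_refl s, hsq⟩, hx's⟩
  have h2 : EMetric.hausdorffEdist (F q x' a) (F s x' a)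
      ≤ ⨆ x ∈ tube xbar s q δ, ⨆ a ∈ A, EMetric.hausdorffEdist (F q x a) (F s x a) := by
    refine le_trans (le_biSup (fun b => EMetric.hausdorffEdist (F q x' b) (F s x' b)) ha) ?_
    exact le_biSup (fun x => ⨆ a ∈ A, EMetric.hausdorffEdist (F q x a) (F s x a)) hx'R
  have h3 : EMetric.hausdorffEdist (F s x' a) (F p x' a)
      ≤ ⨆ x ∈ tube xbar p s δ, ⨆ a ∈ A, EMetric.hausdorffEdist (F s x a) (F p x a) := by
    refine le_trans (le_biSup (fun b => EMetric.hausdorffEdist (F s x' b) (F p x' b)) ha) ?_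
    exact le_biSup (fun x => ⨆ a ∈ A, EMetric.hausdorffEdist (F s x a) (F p x a)) hx'L
  calc EMetric.hausdorffEdist (F q x a) (F p x a)
      ≤ EMetric.hausdorffEdist (F q x a) (F q x' a)
        + EMetric.hausdorffEdist (F q x' a) (F p x a) := EMetric.hausdorffEdist_triangle
    _ ≤ EMetric.hausdorffEdist (F q x a) (F q x' a)
        + (EMetric.hausdorffEdist (F q x' a) (F s x' a)
          + EMetric.hausdorffEdist (F s x' a) (F p x a)) := by
        gcongr
        exact EMetric.hausdorffEdist_triangle
    _ ≤ EMetric.hausdorffEdist (F q x a) (F q x' a)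
        + (EMetric.hausdorffEdist (F q x' a) (F s x' a)
          + (EMetric.hausdorffEdist (F s x' a) (F p x' a)
            + EMetric.hausdorffEdist (F p x' a) (F p x a))) := by
        gcongr
        exact EMetric.hausdorffEdist_triangle
    _ ≤ c + ((⨆ x ∈ tube xbar s q δ, ⨆ a ∈ A, EMetric.hausdorffEdist (F q x a) (F s x a))
        + ((⨆ x ∈ tube xbar p s δ, ⨆ a ∈ A, EMetric.hausdorffEdist (F s x a) (F p x a)) + c)) :=
        add_le_add h1 (add_le_add h2 (add_le_add h3 h4))
    _ = _ := by ring

lemma etaE_subadd {S T s t δ δbar ε κ : ℝ} (γ : ℝ → ℝ)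
    (hγmono : MonotoneOn γ (Ici 0))
    (hC2 : ∀ t ∈ Icc S T, ∀ x x' : Eucl n, ∀ a ∈ A, ∀ a' ∈ A,
      dist x (xbar t) ≤ δbar → dist x' (xbar t) ≤ δbar →
      ∀ y ∈ F t x a, ∃ z ∈ F t x' a', dist y z ≤ γ (dist x x' + dist a a'))
    (hSs : S < s) (hst : s < t) (htT : t ≤ T)
    (hδ : 0 < δ) (hκ : 0 < κ) (hδκ : δ + κ ≤ δbar)
    (hosc : ∀ u ∈ Icc S T, ∀ v ∈ Icc S T, |u - v| ≤ ε → dist (xbar u) (xbar v) ≤ κ) :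
    etaE F xbar A S δ ε t ≤ etaE F xbar A S δ ε s + etaE F xbar A s δ ε t
      + 2 * ENNReal.ofReal (γ κ) := by
  refine iSup_le fun N => iSup_le fun τ => iSup_le fun hp => iSup_le fun hm => ?_
  obtain ⟨hN, h0, hNt, hstr⟩ := hp
  have hmem : ∀ i ≤ N, τ i ∈ Icc S T := fun i hi =>
    ⟨h0 ▸ part_le hstr (Nat.zero_le i) hi, (hNt ▸ part_le hstr hi (le_refl N)).trans htT⟩
  -- locate s
  set j := Nat.findGreatest (fun i => τ i < s) N with hj
  have hP0 : τ 0 < s := by rw [h0]; exact hSs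
  have hPj : τ j < s := by
    have := Nat.findGreatest_spec (P := fun i => τ i < s) (Nat.zero_le N) hP0
    simpa [← hj] using this
  have hjN : j ≤ N := Nat.findGreatest_le N
  have hjltN : j < N := by
    rcases eq_or_lt_of_le hjN with h | h
    · exfalso; rw [h, hNt] at hPj; linarith
    · exact h
  have hsj1 : s ≤ τ (j + 1) := by
    by_contra h
    have := Nat.findGreatest_is_greatest (P := fun i => τ i < s) (n := N)
      (by omega : Nat.findGreatest (fun i => τ i < s) N < j + 1) (by omega)
    exact this (lt_of_not_ge h)
  have hj1N : j + 1 ≤ N := hjltN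
  rcases eq_or_lt_of_le hsj1 with hseq | hslt
  · -- exact split at j+1 : s = τ (j+1)
    have hj1ltN : j + 1 < N := by
      rcases eq_or_lt_of_le hj1N with h | h
      · exfalso; rw [h, hNt] at hseq; linarith [hst]
      · exact h
    set σ2 : ℕ → ℝ := fun i => τ (j + 1 + i) with hσ2
    have hp1 : IsPartition S s (j + 1) τ :=
      ⟨Nat.succ_pos j, h0, hseq.symm, fun i hi => hstr i (lt_of_lt_of_le hi hj1N)⟩
    have hm1 : MeshLE (j + 1) τ ε := fun i hi => hm i (lt_of_lt_of_le hi hj1N)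
    have hp2 : IsPartition s t (N - (j + 1)) σ2 := by
      refine ⟨by omega, by simp [hσ2, hseq], ?_, ?_⟩
      · rw [hσ2]; simp only []
        rw [show j + 1 + (N - (j + 1)) = N by omega, hNt]
      · intro i hi
        rw [hσ2]; simp only []
        rw [show j + 1 + (i + 1) = (j + 1 + i) + 1 by omega]
        exact hstr _ (by omega)
    have hm2 : MeshLE (N - (j + 1)) σ2 ε := by
      intro i hi
      rw [hσ2]; simp only []
      rw [show j + 1 + (i + 1) = (j + 1 + i) + 1 by omega]
      exact hm _ (by omega)
    have hsum : variSum F xbar A δ N τ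
        = variSum F xbar A δ (j + 1) τ + variSum F xbar A δ (N - (j + 1)) σ2 := by
      unfold variSum
      conv_lhs => rw [show N = (j + 1) + (N - (j + 1)) by omega]
      rw [Finset.sum_range_add]
      rfl
    rw [hsum]
    calc variSum F xbar A δ (j + 1) τ + variSum F xbar A δ (N - (j + 1)) σ2
        ≤ etaE F xbar A S δ ε s + etaE F xbar A s δ ε t :=
          add_le_add (le_etaE F xbar A hp1 hm1) (le_etaE F xbar A hp2 hm2)
      _ ≤ _ := le_self_add
  · -- strict interior split : τ j < s < τ (j+1)
    set σ1 : ℕ → ℝ := fun i => if i ≤ j then τ i else s with hσ1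
    set σ2 : ℕ → ℝ := fun i => if i = 0 then s else τ (j + i) with hσ2
    have hσ1j : σ1 j = τ j := by simp [hσ1]
    have hσ1j1 : σ1 (j + 1) = s := by simp [hσ1]
    have hp1 : IsPartition S s (j + 1) σ1 := by
      refine ⟨Nat.succ_pos j, by simp [hσ1, h0], hσ1j1, ?_⟩
      intro i hi
      rcases Nat.lt_or_ge i j with h | h
      · have e1 : σ1 i = τ i := by simp [hσ1, h.le]
        have e2 : σ1 (i + 1) = τ (i + 1) := by simp [hσ1, Nat.succ_le_of_lt h]
        rw [e1, e2]; exact hstr i (by omega)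
      · have : i = j := by omega
        subst this
        rw [hσ1j, hσ1j1]; exact hPj
    have hm1 : MeshLE (j + 1) σ1 ε := by
      intro i hi
      rcases Nat.lt_or_ge i j with h | h
      · have e1 : σ1 i = τ i := by simp [hσ1, h.le]
        have e2 : σ1 (i + 1) = τ (i + 1) := by simp [hσ1, Nat.succ_le_of_lt h]
        rw [e1, e2]; exact hm i (by omega)
      · have : i = j := by omega
        subst this
        rw [hσ1j, hσ1j1]
        have := hm j hjltN
        linarith [hslt]
    have hσ20 : σ2 0 = s := by simp [hσ2]
    have hp2 : IsPartition s t (N - j) σ2 := by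
      refine ⟨by omega, hσ20, ?_, ?_⟩
      · have : N - j ≠ 0 := by omega
        simp only [hσ2, this, if_neg this]
        rw [show j + (N - j) = N by omega, hNt]
      · intro i hi
        rcases Nat.eq_zero_or_pos i with rfl | h
        · rw [hσ20]
          simp only [hσ2, Nat.one_ne_zero, if_neg Nat.one_ne_zero]
          exact hslt
        · have hi0 : i ≠ 0 := by omega
          have hi10 : i + 1 ≠ 0 := by omega
          simp only [hσ2, if_neg hi0, if_neg hi10]
          rw [show j + (i + 1) = (j + i) + 1 by omega]
          exact hstr _ (by omega)
    have hm2 : MeshLE (N - j) σ2 ε := by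
      intro i hi
      rcases Nat.eq_zero_or_pos i with rfl | h
      · rw [hσ20]
        simp only [hσ2, Nat.one_ne_zero, if_neg Nat.one_ne_zero]
        have := hm j hjltN
        linarith [hPj]
      · have hi0 : i ≠ 0 := by omega
        have hi10 : i + 1 ≠ 0 := by omega
        simp only [hσ2, if_neg hi0, if_neg hi10]
        rw [show j + (i + 1) = (j + i) + 1 by omega]
        exact hm _ (by omega)
    -- the sum bound
    have core := core_term_bound F xbar A γ hγmono hC2 hδ hκ hδκ hosc
      (hmem j hjN) (hmem (j + 1) hj1N) ⟨hSs.le, (hst.le).trans htT⟩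
      hPj hslt.le (hm j hjltN)
    have hsum1 : variSum F xbar A δ (j + 1) σ1
        = (∑ i ∈ Finset.range j,
            ⨆ x ∈ tube xbar (τ i) (τ (i + 1)) δ, ⨆ a ∈ A,
              EMetric.hausdorffEdist (F (τ (i + 1)) x a) (F (τ i) x a))
          + ⨆ x ∈ tube xbar (τ j) s δ, ⨆ a ∈ A,
              EMetric.hausdorffEdist (F s x a) (F (τ j) x a) := by
      unfold variSum
      rw [Finset.sum_range_succ]
      congr 1
      · apply Finset.sum_congr rfl
        intro i hi
        have hi' := Finset.mem_range.mp hi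
        have e1 : σ1 i = τ i := by simp [hσ1, hi'.le]
        have e2 : σ1 (i + 1) = τ (i + 1) := by simp [hσ1, Nat.succ_le_of_lt hi']
        rw [e1, e2]
      · rw [hσ1j, hσ1j1]
    have hsum2 : variSum F xbar A δ (N - j) σ2
        = (⨆ x ∈ tube xbar s (τ (j + 1)) δ, ⨆ a ∈ A,
              EMetric.hausdorffEdist (F (τ (j + 1)) x a) (F s x a))
          + ∑ i ∈ Finset.range (N - j - 1),
            ⨆ x ∈ tube xbar (τ (j + 1 + i)) (τ (j + 1 + i + 1)) δ, ⨆ a ∈ A,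
              EMetric.hausdorffEdist (F (τ (j + 1 + i + 1)) x a) (F (τ (j + 1 + i)) x a) := by
      unfold variSum
      conv_lhs => rw [show N - j = 1 + (N - j - 1) by omega]
      rw [Finset.sum_range_add]
      congr 1
      · rw [Finset.sum_range_one, hσ20]
        simp only [hσ2, Nat.one_ne_zero, if_neg Nat.one_ne_zero]
      · apply Finset.sum_congr rfl
        intro i _
        have e1 : σ2 (1 + i) = τ (j + 1 + i) := by
          simp only [hσ2, if_neg (by omega : 1 + i ≠ 0)]
          congr 1; omega
        have e2 : σ2 (1 + i + 1) = τ (j + 1 + i + 1) := by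
          simp only [hσ2, if_neg (by omega : 1 + i + 1 ≠ 0)]
          congr 1; omega
        rw [e1, e2]
    have hsplit : variSum F xbar A δ N τ
        = (∑ i ∈ Finset.range j,
            ⨆ x ∈ tube xbar (τ i) (τ (i + 1)) δ, ⨆ a ∈ A,
              EMetric.hausdorffEdist (F (τ (i + 1)) x a) (F (τ i) x a))
          + (⨆ x ∈ tube xbar (τ j) (τ (j + 1)) δ, ⨆ a ∈ A,
              EMetric.hausdorffEdist (F (τ (j + 1)) x a) (F (τ j) x a))
          + ∑ i ∈ Finset.range (N - j - 1),
            ⨆ x ∈ tube xbar (τ (j + 1 + i)) (τ (j + 1 + i + 1)) δ, ⨆ a ∈ A,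
              EMetric.hausdorffEdist (F (τ (j + 1 + i + 1)) x a) (F (τ (j + 1 + i)) x a) := by
      unfold variSum
      conv_lhs => rw [show N = (j + 1) + (N - j - 1) by omega]
      rw [Finset.sum_range_add, Finset.sum_range_succ]
    calc variSum F xbar A δ N τ
        ≤ variSum F xbar A δ (j + 1) σ1 + variSum F xbar A δ (N - j) σ2
          + 2 * ENNReal.ofReal (γ κ) := by
          rw [hsplit, hsum1, hsum2]
          calc _ ≤ (∑ i ∈ Finset.range j,
                ⨆ x ∈ tube xbar (τ i) (τ (i + 1)) δ, ⨆ a ∈ A,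
                  EMetric.hausdorffEdist (F (τ (i + 1)) x a) (F (τ i) x a))
              + ((⨆ x ∈ tube xbar (τ j) s δ, ⨆ a ∈ A,
                  EMetric.hausdorffEdist (F s x a) (F (τ j) x a))
                + (⨆ x ∈ tube xbar s (τ (j + 1)) δ, ⨆ a ∈ A,
                  EMetric.hausdorffEdist (F (τ (j + 1)) x a) (F s x a))
                + 2 * ENNReal.ofReal (γ κ))
              + ∑ i ∈ Finset.range (N - j - 1),
                ⨆ x ∈ tube xbar (τ (j + 1 + i)) (τ (j + 1 + i + 1)) δ, ⨆ a ∈ A,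
                  EMetric.hausdorffEdist (F (τ (j + 1 + i + 1)) x a) (F (τ (j + 1 + i)) x a) := by
                gcongr
            _ = _ := by ring
      _ ≤ _ := by
          gcongr
          · exact le_etaE F xbar A hp1 hm1
          · exact le_etaE F xbar A hp2 hm2

lemma exists_etaE_lt {S δ t : ℝ} {b : ℝ≥0∞} (h : etaD F xbar A S δ t < b) :
    ∃ ε > 0, etaE F xbar A S δ ε t < b := by
  rw [etaD, iInf_lt_iff] at h
  obtain ⟨ε, hε⟩ := h
  rw [iInf_lt_iff] at hε
  obtain ⟨hε0, h⟩ := hε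
  exact ⟨ε, hε0, h⟩

theorem stmt10' {n k : ℕ} (S T : ℝ) (hST : S < T)
    (A : Set (Eucl k)) (hA : IsCompact A)
    (F : ℝ → Eucl n → Eucl k → Set (Eucl n))
    (hFval : ∀ t x a, (F t x a).Nonempty ∧ IsClosed (F t x a))
    (xbar : ℝ → Eucl n) (hx : ContinuousOn xbar (Icc S T))
    (δbar εbar : ℝ) (hδbar : 0 < δbar) (hεbar : 0 < εbar)
    (hfin : ∀ δ ε : ℝ, 0 < δ → δ < δbar → 0 < ε → ε ≤ εbar →
      etaE F xbar A S δ ε T < ⊤)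
    (γ : ℝ → ℝ)
    (hγc : ContinuousOn γ (Ici 0)) (hγmono : MonotoneOn γ (Ici 0))
    (hγ0 : γ 0 = 0) (hγpos : ∀ r ≥ (0 : ℝ), 0 ≤ γ r)
    (hC2 : ∀ t ∈ Icc S T, ∀ x x' : Eucl n, ∀ a ∈ A, ∀ a' ∈ A,
      dist x (xbar t) ≤ δbar → dist x' (xbar t) ≤ δbar →
      ∀ y ∈ F t x a, ∃ z ∈ F t x' a', dist y z ≤ γ (dist x x' + dist a a')) :
    ∀ δ : ℝ, 0 < δ → δ < δbar →
      ∀ s t : ℝ, S < s → s ≤ t → t ≤ T →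
        etaD F xbar A S δ t - etaD F xbar A S δ s = etaD F xbar A s δ t := by
  intro δ hδ0 hδb s t hSs hst htT
  rcases eq_or_lt_of_le hst with rfl | hst'
  · -- degenerate case s = t
    have hdeg : etaD F xbar A s δ s = 0 := by
      refine le_antisymm ?_ zero_le
      rw [etaD]
      refine (iInf_le _ 1).trans ?_
      refine (iInf_le _ one_pos).trans ?_
      rw [etaE_degenerate]
    rw [hdeg, tsub_self]
  · -- main case s < t
    have hSt : S < t := hSs.trans hst'
    have hsT : s ≤ T := hst'.le.trans htT
    -- finiteness
    have hTt : etaD F xbar A S δ t < ⊤ :=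
      lt_of_le_of_lt ((etaD_le_etaE F xbar A hεbar).trans
        (etaE_mono_t F xbar A hSt htT hεbar)) (hfin δ εbar hδ0 hδb hεbar le_rfl)
    have hLfin : etaD F xbar A S δ s < ⊤ :=
      lt_of_le_of_lt ((etaD_le_etaE F xbar A hεbar).trans
        (etaE_mono_t F xbar A hSs hsT hεbar)) (hfin δ εbar hδ0 hδb hεbar le_rfl)
    have hsuper : etaD F xbar A S δ s + etaD F xbar A s δ t ≤ etaD F xbar A S δ t :=
      etaD_superadd F xbar A hSs hst'
    have hRfin : etaD F xbar A s δ t < ⊤ :=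
      lt_of_le_of_lt (le_add_self.trans hsuper) hTt
    -- subadditivity
    have hsub : etaD F xbar A S δ t ≤ etaD F xbar A S δ s + etaD F xbar A s δ t := by
      refine ENNReal.le_of_forall_pos_le_add fun c hc hfin' => ?_
      set c₁ : ℝ := (c : ℝ) / 3 with hc₁
      have hc₁0 : 0 < c₁ := by positivity
      -- choose κ
      have hcw : ContinuousWithinAt γ (Ici 0) 0 := hγc 0 (le_refl (0:ℝ))
      rw [Metric.continuousWithinAt_iff] at hcw
      obtain ⟨κ1, hκ10, hκ1⟩ := hcw (c₁ / 2) (by positivity)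
      set κ : ℝ := min (κ1 / 2) (δbar - δ) with hκdef
      have hκ0 : 0 < κ := lt_min (by positivity) (by linarith)
      have hγκ : γ κ < c₁ / 2 := by
        have := hκ1 (x := κ) (le_of_lt hκ0) (by
          rw [Real.dist_eq, sub_zero, abs_of_pos hκ0]
          calc κ ≤ κ1 / 2 := min_le_left _ _
            _ < κ1 := by linarith)
        rwa [hγ0, Real.dist_eq, sub_zero, abs_of_nonneg (hγpos κ hκ0.le)] at this
      have hδκ : δ + κ ≤ δbar := by
        have : κ ≤ δbar - δ := min_le_right _ _
        linarith
      -- uniform continuity of xbar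
      have hUC : UniformContinuousOn xbar (Icc S T) :=
        (isCompact_Icc).uniformContinuousOn_of_continuous hx
      rw [Metric.uniformContinuousOn_iff] at hUC
      obtain ⟨ε1, hε10, hε1⟩ := hUC κ hκ0
      -- choose εa, εb beating the infima
      have hLlt : etaD F xbar A S δ s < etaD F xbar A S δ s + ENNReal.ofReal c₁ :=
        ENNReal.lt_add_right hLfin.ne (by simp [ENNReal.ofReal_pos.mpr hc₁0, (ENNReal.ofReal_pos.mpr hc₁0).ne'])
      have hRlt : etaD F xbar A s δ t < etaD F xbar A s δ t + ENNReal.ofReal c₁ :=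
        ENNReal.lt_add_right hRfin.ne (by simp [(ENNReal.ofReal_pos.mpr hc₁0).ne'])
      obtain ⟨εa, hεa0, hεa⟩ := exists_etaE_lt F xbar A hLlt
      obtain ⟨εb, hεb0, hεb⟩ := exists_etaE_lt F xbar A hRlt
      set ε : ℝ := min (ε1 / 2) (min εa εb) with hεdef
      have hε0 : 0 < ε := lt_min (by positivity) (lt_min hεa0 hεb0)
      have hosc : ∀ u ∈ Icc S T, ∀ v ∈ Icc S T, |u - v| ≤ ε →
          dist (xbar u) (xbar v) ≤ κ := by
        intro u hu v hv huv
        refine (hε1 u hu v hv ?_).le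
        rw [Real.dist_eq]
        calc |u - v| ≤ ε := huv
          _ ≤ ε1 / 2 := min_le_left _ _
          _ < ε1 := by linarith
      have key := etaE_subadd F xbar A γ hγmono hC2 hSs hst' htT hδ0 hκ0 hδκ hosc
        (ε := ε)
      have h2c : 2 * ENNReal.ofReal (γ κ) ≤ ENNReal.ofReal c₁ := by
        calc 2 * ENNReal.ofReal (γ κ) = ENNReal.ofReal (2 * γ κ) := by
              rw [ENNReal.ofReal_mul (by norm_num : (0:ℝ) ≤ 2)]
              norm_num
          _ ≤ ENNReal.ofReal c₁ := ENNReal.ofReal_le_ofReal (by linarith)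
      calc etaD F xbar A S δ t ≤ etaE F xbar A S δ ε t := etaD_le_etaE F xbar A hε0
        _ ≤ etaE F xbar A S δ ε s + etaE F xbar A s δ ε t
            + 2 * ENNReal.ofReal (γ κ) := key
        _ ≤ etaE F xbar A S δ εa s + etaE F xbar A s δ εb t + ENNReal.ofReal c₁ := by
            refine add_le_add (add_le_add ?_ ?_) h2c
            · exact etaE_mono_eps F xbar A ((min_le_right _ _).trans (min_le_left _ _))
            · exact etaE_mono_eps F xbar A ((min_le_right _ _).trans (min_le_right _ _))
        _ ≤ (etaD F xbar A S δ s + ENNReal.ofReal c₁)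
            + (etaD F xbar A s δ t + ENNReal.ofReal c₁) + ENNReal.ofReal c₁ := by
            exact add_le_add (add_le_add hεa.le hεb.le) le_rfl
        _ = etaD F xbar A S δ s + etaD F xbar A s δ t
            + (ENNReal.ofReal c₁ + ENNReal.ofReal c₁ + ENNReal.ofReal c₁) := by ring
        _ = etaD F xbar A S δ s + etaD F xbar A s δ t + (c : ℝ≥0∞) := by
            rw [← ENNReal.ofReal_add (by positivity) (by positivity),
              ← ENNReal.ofReal_add (by positivity) (by positivity)]
            congr 1
            rw [show c₁ + c₁ + c₁ = (c : ℝ) by rw [hc₁]; ring]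
            exact ENNReal.ofReal_coe_nnreal
    have heq : etaD F xbar A S δ t = etaD F xbar A S δ s + etaD F xbar A s δ t :=
      le_antisymm hsub hsuper
    rw [heq]
    exact ENNReal.add_sub_cancel_left hLfin.ne


end Aux

/-- The increments of the `δ`-perturbed cumulative variation function
coincide with the interval-restricted `δ`-perturbed cumulative variation:
`η^δ_A(t) − η^δ_A(s) = η^δ_A([s,t])` for `S < s ≤ t ≤ T`.  (Here `etaD F xbar A s δ t` is
the `δ`-perturbed cumulative variation computed with partitions of `[s,t]`.) -/
theorem stmt10 {n k : ℕ} (S T : ℝ) (hST : S < T)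
    (A : Set (Eucl k)) (hA : IsCompact A)
    (F : ℝ → Eucl n → Eucl k → Set (Eucl n))
    (hFval : ∀ t x a, (F t x a).Nonempty ∧ IsClosed (F t x a))
    (xbar : ℝ → Eucl n) (hx : ContinuousOn xbar (Icc S T))
    (hBV : eta F xbar A S T < ⊤)
    (δbar εbar : ℝ) (hδbar : 0 < δbar) (hεbar : 0 < εbar)
    (hfin : ∀ δ ε : ℝ, 0 < δ → δ < δbar → 0 < ε → ε ≤ εbar →
      etaE F xbar A S δ ε T < ⊤)
    (γ : ℝ → ℝ) (hC2 : HypC2 F xbar A S T δbar γ) :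
    ∀ δ : ℝ, 0 < δ → δ < δbar →
      ∀ s t : ℝ, S < s → s ≤ t → t ≤ T →
        etaD F xbar A S δ t - etaD F xbar A S δ s = etaD F xbar A s δ t := by
  obtain ⟨hγc, hγmono, hγ0, hγpos, hC2'⟩ := hC2
  exact stmt10' S T hST A hA F hFval xbar hx δbar εbar hδbar hεbar hfin γ hγc hγmono hγ0 hγpos hC2'
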